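/- Let 0 < w < 1/2 and g(x) = w(1+x)^{−log₂(1−w)} + (1−w)(1−x)^{−log₂(1−w)}. Then g(0) = 1, g(−1) = 1, and 0 < g(x) < 1 for all x ∈ (0, 1]. -/

import Mathlib

open Real

noncomputable def gFun (w x : ℝ) : ℝ :=
  w * (1 + x) ^ (-Real.logb 2 (1 - w)) + (1 - w) * (1 - x) ^ (-Real.logb 2 (1 - w))

theorem stmt_7 (w : ℝ) (hw0 : 0 < w) (hw : w < 1/2) :
    gFun w 0 = 1 ∧ gFun w (-1) = 1 ∧
    ∀ x ∈ Set.Ioc (0:ℝ) 1, 0 < gFun w x ∧ gFun w x < 1 := by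
  have hw1 : 0 < 1 - w := by linarith
  have hw1' : 1 - w < 1 := by linarith
  set α : ℝ := -Real.logb 2 (1 - w) with hα_def
  have hα : 0 < α := by
    have := Real.logb_neg (b := 2) (by norm_num) hw1 hw1'
    linarith
  have hα1 : α < 1 := by
    have h : (-1 : ℝ) < Real.logb 2 (1 - w) := by
      rw [Real.lt_logb_iff_rpow_lt (by norm_num) hw1]
      rw [show ((2:ℝ) ^ (-1:ℝ)) = 1/2 by
        rw [Real.rpow_neg_one]; norm_num]
      linarith
    linarith
  refine ⟨?_, ?_, ?_⟩
  · simp [gFun, Real.one_rpow]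
  · have h0 : ((1:ℝ) + (-1)) = 0 := by norm_num
    have h2 : ((1:ℝ) - (-1)) = 2 := by norm_num
    have h2pow : (2:ℝ) ^ (-Real.logb 2 (1 - w)) = (1 - w)⁻¹ := by
      rw [Real.rpow_neg (by norm_num), Real.rpow_logb (by norm_num) (by norm_num) hw1]
    rw [gFun, h0, h2, Real.zero_rpow (ne_of_gt hα)]
    rw [h2pow]
    field_simp
    ring
  · intro x hx
    obtain ⟨hx0, hx1⟩ := hx
    constructor
    · have h1 : (0:ℝ) < (1 + x) ^ α := Real.rpow_pos_of_pos (by linarith) α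
      have h2 : (0:ℝ) ≤ (1 - x) ^ α := Real.rpow_nonneg (by linarith) α
      have := mul_pos hw0 h1
      have := mul_nonneg hw1.le h2
      show 0 < w * (1 + x) ^ α + (1 - w) * (1 - x) ^ α
      linarith
    · have hne : (1 + x) ≠ (1 - x) := by intro h; linarith
      have hconc := (Real.strictConcaveOn_rpow hα hα1).2
        (Set.mem_Ici.2 (by linarith : (0:ℝ) ≤ 1 + x))
        (Set.mem_Ici.2 (by linarith : (0:ℝ) ≤ 1 - x))
        hne hw0 hw1 (by ring)
      have hmid : w • (1 + x) + (1 - w) • (1 - x) = 1 - x * (1 - 2*w) := by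
        simp [smul_eq_mul]; ring
      rw [hmid] at hconc
      have hbase0 : (0:ℝ) ≤ 1 - x * (1 - 2*w) := by nlinarith
      have hbase1 : 1 - x * (1 - 2*w) < 1 := by nlinarith
      have hlt1 : (1 - x * (1 - 2*w)) ^ α < 1 := by
        calc (1 - x * (1 - 2*w)) ^ α < 1 ^ α :=
              Real.rpow_lt_rpow hbase0 hbase1 hα
          _ = 1 := Real.one_rpow α
      show w * (1 + x) ^ α + (1 - w) * (1 - x) ^ α < 1
      simp only [smul_eq_mul] at hconc
      linarith
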